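/- Let P be a finite planar point set in general position with distinct x-coordinates and let D be the set of all crossing-free segment sets C on P satisfying: C is cycle-free and C has no hidden component. Then D is serializable: D is non-empty, every non-empty C ∈ D contains a right-most extreme element rex(C), and C \ {rex(C)} ∈ D. -/

import Mathlib

open Finset

/-- A segment is a pair of points in the plane (left endpoint, right endpoint). -/
abbrev Seg := (ℝ × ℝ) × (ℝ × ℝ)

/-- The lower shadow of a segment `s`: points whose upward vertical ray meets the
relative interior of `s`. -/
def lowShadow (s : Seg) : Set (ℝ × ℝ) :=
  {p | ∃ y : ℝ, p.2 < y ∧ (p.1, y) ∈ openSegment ℝ s.1 s.2}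

/-- The upper shadow of a segment `s`: points whose downward vertical ray meets the
relative interior of `s`. -/
def uppShadow (s : Seg) : Set (ℝ × ℝ) :=
  {p | ∃ y : ℝ, y < p.2 ∧ (p.1, y) ∈ openSegment ℝ s.1 s.2}

/-- The endpoints of a segment. -/
def segPts (s : Seg) : Set (ℝ × ℝ) := {s.1, s.2}

/-- The dependency relation: `s₂` depends on `s₁` (written `s₁ ⊑ s₂`) whenever
`pts(s₁) ∩ low(s₂) ≠ ∅` or `upp(s₁) ∩ pts(s₂) ≠ ∅`. -/
def SegDep (s₁ s₂ : Seg) : Prop :=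
  (∃ p ∈ segPts s₁, p ∈ lowShadow s₂) ∨ (∃ p ∈ uppShadow s₁, p ∈ segPts s₂)

/-- A segment `s` is extreme in `C` if no other segment of `C` depends on it. -/
def SegExtreme (C : Finset Seg) (s : Seg) : Prop :=
  s ∈ C ∧ ∀ s' ∈ C, s' ≠ s → ¬ SegDep s s'

/-- `s` is the right-most extreme element of `C`. -/
def IsRex (C : Finset Seg) (s : Seg) : Prop :=
  SegExtreme C s ∧ ∀ s', SegExtreme C s' → s' ≠ s → s'.2.1 ≤ s.1.1

/-- One extension step `C →ₛ C'`: `C = C' \ {s}` and `s = rex(C')`. -/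
def StepRel (C : Finset Seg) (s : Seg) (C' : Finset Seg) : Prop :=
  C = C'.erase s ∧ s ∈ C' ∧ IsRex C' s

/-- `C` is a prefix of `C*`: `C*` is obtained from `C` by repeatedly adding a segment
that is the right-most extreme element of the extended set. -/
def IsSegPrefix (C C' : Finset Seg) : Prop :=
  Relation.ReflTransGen (fun A B => ∃ s, StepRel A s B) C C'

/-- `C` is crossing-free: no two distinct segments share an interior point. -/
def CrossingFree (C : Finset Seg) : Prop :=
  ∀ s ∈ C, ∀ t ∈ C, s ≠ t →
    Disjoint (openSegment ℝ s.1 s.2) (openSegment ℝ t.1 t.2)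

/-- Segments of `C` have endpoints in `P`, listed from left to right. -/
def SegsOn (P : Finset (ℝ × ℝ)) (C : Finset Seg) : Prop :=
  ∀ s ∈ C, s.1 ∈ P ∧ s.2 ∈ P ∧ s.1.1 < s.2.1

/-- The graph on the plane induced by the segment set `C`. -/
def segGraph (C : Finset Seg) : SimpleGraph (ℝ × ℝ) where
  Adj a b := a ≠ b ∧ ((a, b) ∈ C ∨ (b, a) ∈ C)
  symm := ⟨fun a b h => ⟨h.1.symm, h.2.symm⟩⟩
  loopless := ⟨fun a h => h.1 rfl⟩

/-- `P` is in general position: no three distinct points are collinear. -/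
def GenPos (P : Finset (ℝ × ℝ)) : Prop :=
  ∀ p ∈ P, ∀ q ∈ P, ∀ r ∈ P, p ≠ q → q ≠ r → p ≠ r →
    ¬ Collinear ℝ ({p, q, r} : Set (ℝ × ℝ))

/-- No two points of `P` share an `x`-coordinate. -/
def DistinctX (P : Finset (ℝ × ℝ)) : Prop :=
  ∀ p ∈ P, ∀ q ∈ P, p ≠ q → p.1 ≠ q.1

/-- `C` has a hidden component: some connected component of `C` lies entirely below
segments of `C`. -/
def HasHiddenComponent (P : Finset (ℝ × ℝ)) (C : Finset Seg) : Prop :=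
  ∃ p ∈ P, ∀ q, (segGraph C).Reachable p q → ∃ s ∈ C, q ∈ lowShadow s

/-- The degree of a point `p` in the segment set `C`. -/
noncomputable def segDeg (C : Finset Seg) (p : ℝ × ℝ) : ℕ :=
  (C.filter (fun s => s.1 = p ∨ s.2 = p)).card

/-- `C` is a crossing-free spanning tree on `P`. -/
def IsCFSpanningTree (P : Finset (ℝ × ℝ)) (C : Finset Seg) : Prop :=
  SegsOn P C ∧ CrossingFree C ∧ (segGraph C).IsAcyclic ∧
  ∀ p ∈ P, ∀ q ∈ P, (segGraph C).Reachable p q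

/-- `C` is a crossing-free spanning cycle on `P`. -/
def IsCFSpanningCycle (P : Finset (ℝ × ℝ)) (C : Finset Seg) : Prop :=
  SegsOn P C ∧ CrossingFree C ∧ (∀ p ∈ P, segDeg C p = 2) ∧
  ∀ p ∈ P, ∀ q ∈ P, (segGraph C).Reachable p q

/-- Height of (the line through) segment `s` at abscissa `x`. -/
noncomputable def fAt (s : Seg) (x : ℝ) : ℝ :=
  s.1.2 + (x - s.1.1) * (s.2.2 - s.1.2) / (s.2.1 - s.1.1)

lemma fAt_left (s : Seg) : fAt s s.1.1 = s.1.2 := by simp [fAt]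

lemma fAt_right (s : Seg) (h : s.1.1 < s.2.1) : fAt s s.2.1 = s.2.2 := by
  have h0 : s.2.1 - s.1.1 ≠ 0 := by linarith
  simp only [fAt]; rw [mul_div_cancel_left₀ _ h0]; ring

lemma fAt_continuous (s : Seg) : Continuous (fAt s) := by
  unfold fAt; fun_prop

lemma mem_openSegment_iff {s : Seg} (h : s.1.1 < s.2.1) {p : ℝ × ℝ} :
    p ∈ openSegment ℝ s.1 s.2 ↔ s.1.1 < p.1 ∧ p.1 < s.2.1 ∧ p.2 = fAt s p.1 := by
  have hne : s.2.1 - s.1.1 ≠ 0 := by linarith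
  constructor
  · rintro ⟨a, b, ha, hb, hab, hz⟩
    have h1 : a * s.1.1 + b * s.2.1 = p.1 := by
      have := congrArg Prod.fst hz; simpa [Prod.smul_def, smul_eq_mul] using this
    have h2 : a * s.1.2 + b * s.2.2 = p.2 := by
      have := congrArg Prod.snd hz; simpa [Prod.smul_def, smul_eq_mul] using this
    have ha1 : a = 1 - b := by linarith
    have e1 : p.1 - s.1.1 = b * (s.2.1 - s.1.1) := by linear_combination -h1 + s.1.1 * ha1
    have e2 : s.2.1 - p.1 = a * (s.2.1 - s.1.1) := by linear_combination h1 - s.2.1 * hab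
    have e3 : p.2 - s.1.2 = b * (s.2.2 - s.1.2) := by linear_combination -h2 + s.1.2 * ha1
    refine ⟨by nlinarith [mul_pos hb (sub_pos.2 h)], by nlinarith [mul_pos ha (sub_pos.2 h)], ?_⟩
    rw [fAt, e1, mul_right_comm, mul_div_cancel_right₀ _ hne]; linarith [e3]
  · rintro ⟨h1, h2, h3⟩
    refine ⟨1 - (p.1 - s.1.1) / (s.2.1 - s.1.1), (p.1 - s.1.1) / (s.2.1 - s.1.1), ?_, ?_, by ring, ?_⟩
    · rw [sub_pos]; rw [div_lt_one (by linarith)]; linarith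
    · exact div_pos (by linarith) (by linarith)
    · have hp : p = (p.1, p.2) := rfl
      rw [hp, Prod.ext_iff]
      constructor
      · simp only [Prod.fst_add, Prod.smul_fst, smul_eq_mul]; field_simp; ring
      · simp only [Prod.snd_add, Prod.smul_snd, smul_eq_mul, h3, fAt]; field_simp; ring
/-- `s` lies strictly below `t` somewhere over their common open `x`-range. -/
def Below (s t : Seg) : Prop :=
  ∃ x, (s.1.1 < x ∧ x < s.2.1) ∧ (t.1.1 < x ∧ x < t.2.1) ∧ fAt s x < fAt t x

lemma below_ne {s t : Seg} (h : Below s t) : s ≠ t := by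
  rintro rfl; obtain ⟨x, _, _, hlt⟩ := h; exact lt_irrefl _ hlt

lemma point_on_open {s : Seg} (hs : s.1.1 < s.2.1) {x : ℝ} (h1 : s.1.1 < x) (h2 : x < s.2.1) :
    (x, fAt s x) ∈ openSegment ℝ s.1 s.2 := (mem_openSegment_iff hs).2 ⟨h1, h2, rfl⟩

section
variable {P : Finset (ℝ × ℝ)} {C : Finset Seg}

lemma endpoint_not_on_open (hgen : GenPos P) (hC : SegsOn P C) {s : Seg} (hs : s ∈ C)
    {q : ℝ × ℝ} (hq : q ∈ P) (hmem : q ∈ openSegment ℝ s.1 s.2) : False := by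
  obtain ⟨h1p, h2p, hlr⟩ := hC s hs
  rw [mem_openSegment_iff hlr] at hmem
  obtain ⟨ha, hb, hf⟩ := hmem
  have hne : s.2.1 - s.1.1 ≠ 0 := by linarith
  have hq1 : q ≠ s.1 := fun h => by rw [h] at ha; exact lt_irrefl _ ha
  have hq2 : q ≠ s.2 := fun h => by rw [h] at hb; exact lt_irrefl _ hb
  have h12 : s.1 ≠ s.2 := fun h => by rw [h] at hlr; exact lt_irrefl _ hlr
  apply hgen q hq s.1 h1p s.2 h2p hq1 h12 hq2
  apply collinear_insert_of_mem_affineSpan_pair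
  have hq : q = AffineMap.lineMap s.1 s.2 ((q.1 - s.1.1) / (s.2.1 - s.1.1)) := by
    rw [AffineMap.lineMap_apply]
    have : q = (q.1, q.2) := rfl
    rw [this, Prod.ext_iff]
    constructor
    · show q.1 = (((q.1 - s.1.1) / (s.2.1 - s.1.1)) • (s.2 -ᵥ s.1) +ᵥ s.1).1
      simp only [vsub_eq_sub, vadd_eq_add, Prod.fst_add, Prod.smul_fst, Prod.fst_sub, smul_eq_mul]
      field_simp; ring
    · show q.2 = (((q.1 - s.1.1) / (s.2.1 - s.1.1)) • (s.2 -ᵥ s.1) +ᵥ s.1).2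
      simp only [vsub_eq_sub, vadd_eq_add, Prod.snd_add, Prod.smul_snd, Prod.snd_sub, smul_eq_mul]
      rw [hf, fAt]; field_simp; ring
  rw [hq]; exact AffineMap.lineMap_mem_affineSpan_pair _ _ _

lemma not_vanish (hcf : CrossingFree C) (hC : SegsOn P C) {s t : Seg} (hs : s ∈ C) (ht : t ∈ C)
    (hst : s ≠ t) {x : ℝ} (h1 : s.1.1 < x) (h2 : x < s.2.1) (h3 : t.1.1 < x) (h4 : x < t.2.1) :
    fAt s x ≠ fAt t x := by
  intro he
  have d := hcf s hs t ht hst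
  have m1 := point_on_open (hC s hs).2.2 h1 h2
  have m2 := point_on_open (hC t ht).2.2 h3 h4
  rw [← he] at m2
  exact Set.disjoint_left.1 d m1 m2

lemma below_le (hgen : GenPos P) (hcf : CrossingFree C) (hC : SegsOn P C) {s t : Seg}
    (hs : s ∈ C) (ht : t ∈ C) (hb : Below s t) {x : ℝ}
    (h1 : s.1.1 ≤ x) (h2 : x ≤ s.2.1) (h3 : t.1.1 ≤ x) (h4 : x ≤ t.2.1) :
    fAt s x ≤ fAt t x := by
  have hst := below_ne hb
  obtain ⟨x0, ⟨a1, a2⟩, ⟨a3, a4⟩, hlt⟩ := hb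
  by_contra hle
  push_neg at hle
  have hgc : Continuous (fun y => fAt t y - fAt s y) := (fAt_continuous t).sub (fAt_continuous s)
  have hivt := intermediate_value_uIcc (a := x0) (b := x) (f := fun y => fAt t y - fAt s y)
    hgc.continuousOn
  have h0m : (0 : ℝ) ∈ Set.uIcc (fAt t x0 - fAt s x0) (fAt t x - fAt s x) := by
    rw [Set.mem_uIcc]; right
    exact ⟨by linarith, by linarith⟩
  obtain ⟨c, hc, hgc0⟩ := hivt h0m
  have hgc0 : fAt t c - fAt s c = 0 := hgc0
  have hcx0 : c ≠ x0 := by rintro rfl; linarith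
  have hcx : c ≠ x := by rintro rfl; linarith
  have hcb : min x0 x < c ∧ c < max x0 x := by
    rw [Set.mem_uIcc] at hc
    rcases hc with ⟨u, v⟩ | ⟨u, v⟩
    · exact ⟨lt_of_le_of_lt (min_le_left _ _) (lt_of_le_of_ne u (Ne.symm hcx0)),
        lt_of_lt_of_le (lt_of_le_of_ne v hcx) (le_max_right _ _)⟩
    · exact ⟨lt_of_le_of_lt (min_le_right _ _) (lt_of_le_of_ne u (Ne.symm hcx)),
        lt_of_lt_of_le (lt_of_le_of_ne v hcx0) (le_max_left _ _)⟩
  have hv : fAt s c ≠ fAt t c := by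
    apply not_vanish hcf hC hs ht hst
    · calc s.1.1 ≤ min x0 x := le_min (le_of_lt a1) h1
        _ < c := hcb.1
    · calc c < max x0 x := hcb.2
        _ ≤ s.2.1 := max_le (le_of_lt a2) h2
    · calc t.1.1 ≤ min x0 x := le_min (le_of_lt a3) h3
        _ < c := hcb.1
    · calc c < max x0 x := hcb.2
        _ ≤ t.2.1 := max_le (le_of_lt a4) h4
  have heq : fAt s c = fAt t c := by linarith
  exact hv heq

lemma below_lt (hgen : GenPos P) (hcf : CrossingFree C) (hC : SegsOn P C) {s t : Seg}
    (hs : s ∈ C) (ht : t ∈ C) (hb : Below s t) {x : ℝ}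
    (h1 : s.1.1 < x) (h2 : x < s.2.1) (h3 : t.1.1 < x) (h4 : x < t.2.1) :
    fAt s x < fAt t x :=
  lt_of_le_of_ne (below_le hgen hcf hC hs ht hb h1.le h2.le h3.le h4.le)
    (not_vanish hcf hC hs ht (below_ne hb) h1 h2 h3 h4)

end
lemma below_of_right {s t : Seg} (hls : s.1.1 < s.2.1) (hlt : t.1.1 < t.2.1) {x0 : ℝ}
    (h1 : s.1.1 ≤ x0) (h2 : x0 < s.2.1) (h3 : t.1.1 ≤ x0) (h4 : x0 < t.2.1)
    (h5 : fAt s x0 < fAt t x0) : Below s t := by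
  have hopen : IsOpen {y : ℝ | fAt s y < fAt t y} := isOpen_lt (fAt_continuous s) (fAt_continuous t)
  have m1 : Set.Ioo x0 s.2.1 ∈ nhdsWithin x0 (Set.Ioi x0) :=
    Ioo_mem_nhdsGT_of_mem ⟨le_refl x0, h2⟩
  have m2 : Set.Ioo x0 t.2.1 ∈ nhdsWithin x0 (Set.Ioi x0) :=
    Ioo_mem_nhdsGT_of_mem ⟨le_refl x0, h4⟩
  have m3 : {y : ℝ | fAt s y < fAt t y} ∈ nhdsWithin x0 (Set.Ioi x0) :=
    nhdsWithin_le_nhds (hopen.mem_nhds h5)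
  obtain ⟨x, hx⟩ := Filter.nonempty_of_mem (Filter.inter_mem (Filter.inter_mem m1 m2) m3)
  obtain ⟨⟨⟨u1, u2⟩, ⟨u3, u4⟩⟩, u5⟩ := hx
  exact ⟨x, ⟨lt_of_le_of_lt h1 u1, u2⟩, ⟨lt_of_le_of_lt h3 u3, u4⟩, u5⟩

lemma below_of_left {s t : Seg} (hls : s.1.1 < s.2.1) (hlt : t.1.1 < t.2.1) {x0 : ℝ}
    (h1 : s.1.1 < x0) (h2 : x0 ≤ s.2.1) (h3 : t.1.1 < x0) (h4 : x0 ≤ t.2.1)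
    (h5 : fAt s x0 < fAt t x0) : Below s t := by
  have hopen : IsOpen {y : ℝ | fAt s y < fAt t y} := isOpen_lt (fAt_continuous s) (fAt_continuous t)
  have m1 : Set.Ioo s.1.1 x0 ∈ nhdsWithin x0 (Set.Iio x0) :=
    Ioo_mem_nhdsLT_of_mem ⟨h1, le_refl x0⟩
  have m2 : Set.Ioo t.1.1 x0 ∈ nhdsWithin x0 (Set.Iio x0) :=
    Ioo_mem_nhdsLT_of_mem ⟨h3, le_refl x0⟩
  have m3 : {y : ℝ | fAt s y < fAt t y} ∈ nhdsWithin x0 (Set.Iio x0) :=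
    nhdsWithin_le_nhds (hopen.mem_nhds h5)
  obtain ⟨x, hx⟩ := Filter.nonempty_of_mem (Filter.inter_mem (Filter.inter_mem m1 m2) m3)
  obtain ⟨⟨⟨u1, u2⟩, ⟨u3, u4⟩⟩, u5⟩ := hx
  exact ⟨x, ⟨u1, lt_of_lt_of_le u2 h2⟩, ⟨u3, lt_of_lt_of_le u4 h4⟩, u5⟩

lemma segDep_imp_below {s t : Seg} (hls : s.1.1 < s.2.1) (hlt : t.1.1 < t.2.1)
    (h : SegDep s t) : Below s t := by
  rcases h with ⟨p, hp, y, hy, hmem⟩ | ⟨q, ⟨y, hy, hmem⟩, hq⟩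
  · rw [mem_openSegment_iff hlt] at hmem
    obtain ⟨b1, b2, b3⟩ := hmem
    rcases hp with rfl | hp
    · exact below_of_right hls hlt (le_refl _) hls b1.le b2
        (by rw [fAt_left]; exact hy.trans_eq b3)
    · rw [Set.mem_singleton_iff] at hp; subst hp
      exact below_of_left hls hlt hls (le_refl _) b1 b2.le
        (by rw [fAt_right _ hls]; exact hy.trans_eq b3)
  · rw [mem_openSegment_iff hls] at hmem
    obtain ⟨b1, b2, b3⟩ := hmem
    rcases hq with rfl | hq
    · exact below_of_right hls hlt b1.le b2 (le_refl _) hlt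
        (by rw [fAt_left]; exact b3.symm.trans_lt hy)
    · rw [Set.mem_singleton_iff] at hq; subst hq
      exact below_of_left hls hlt b1 b2.le hlt (le_refl _)
        (by rw [fAt_right _ hlt]; exact b3.symm.trans_lt hy)

section
variable {P : Finset (ℝ × ℝ)} {C : Finset Seg}

lemma below_imp_segDep (hgen : GenPos P) (hdx : DistinctX P) (hcf : CrossingFree C)
    (hC : SegsOn P C) {s t : Seg} (hs : s ∈ C) (ht : t ∈ C) (hb : Below s t) : SegDep s t := by
  have hls := (hC s hs).2.2
  have hlt := (hC t ht).2.2
  obtain ⟨x0, ⟨a1, a2⟩, ⟨a3, a4⟩, h0⟩ := hb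
  rcases lt_trichotomy s.1.1 t.1.1 with hl | hl | hl
  · -- t's left endpoint lies above the interior of s
    have hx1 : t.1.1 < s.2.1 := lt_trans a3 a2
    have hle : fAt s t.1.1 ≤ fAt t t.1.1 :=
      below_le hgen hcf hC hs ht ⟨x0, ⟨a1, a2⟩, ⟨a3, a4⟩, h0⟩ hl.le hx1.le (le_refl _) hlt.le
    rw [fAt_left] at hle
    have hne : fAt s t.1.1 ≠ t.1.2 := by
      intro he
      exact endpoint_not_on_open hgen hC hs (hC t ht).1
        (by have := point_on_open hls hl hx1; rw [he] at this
            have ht1 : t.1 = (t.1.1, t.1.2) := rfl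
            rw [ht1]; exact this)
    refine Or.inr ⟨t.1, ⟨fAt s t.1.1, lt_of_le_of_ne hle hne, point_on_open hls hl hx1⟩,
      Or.inl rfl⟩
  · -- shared left endpoint; compare right endpoints
    have he1 : s.1 = t.1 := by
      by_contra hne
      exact hdx s.1 (hC s hs).1 t.1 (hC t ht).1 hne hl
    rcases lt_trichotomy s.2.1 t.2.1 with hr | hr | hr
    · -- s's right endpoint lies below the interior of t
      have hx1 : t.1.1 < s.2.1 := by rw [← hl]; exact hls
      have hle : fAt s s.2.1 ≤ fAt t s.2.1 :=
        below_le hgen hcf hC hs ht ⟨x0, ⟨a1, a2⟩, ⟨a3, a4⟩, h0⟩ hls.le (le_refl _) hx1.le hr.le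
      rw [fAt_right _ hls] at hle
      have hne : s.2.2 ≠ fAt t s.2.1 := by
        intro he
        exact endpoint_not_on_open hgen hC ht (hC s hs).2.1
          (by have := point_on_open hlt hx1 hr
              have hs2 : s.2 = (s.2.1, s.2.2) := rfl
              rw [hs2, he]; exact this)
      exact Or.inl ⟨s.2, Or.inr rfl, fAt t s.2.1, lt_of_le_of_ne hle hne, point_on_open hlt hx1 hr⟩
    · -- identical segments: impossible
      exfalso
      have he2 : s.2 = t.2 := by
        by_contra hne
        exact hdx s.2 (hC s hs).2.1 t.2 (hC t ht).2.1 hne hr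
      exact below_ne ⟨x0, ⟨a1, a2⟩, ⟨a3, a4⟩, h0⟩ (Prod.ext he1 he2)
    · -- t's right endpoint lies above the interior of s
      have hx1 : s.1.1 < t.2.1 := by rw [hl]; exact hlt
      have hle : fAt s t.2.1 ≤ fAt t t.2.1 :=
        below_le hgen hcf hC hs ht ⟨x0, ⟨a1, a2⟩, ⟨a3, a4⟩, h0⟩ hx1.le hr.le hlt.le (le_refl _)
      rw [fAt_right _ hlt] at hle
      have hne : fAt s t.2.1 ≠ t.2.2 := by
        intro he
        exact endpoint_not_on_open hgen hC hs (hC t ht).2.1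
          (by have := point_on_open hls hx1 hr; rw [he] at this
              have ht2 : t.2 = (t.2.1, t.2.2) := rfl
              rw [ht2]; exact this)
      exact Or.inr ⟨t.2, ⟨fAt s t.2.1, lt_of_le_of_ne hle hne, point_on_open hls hx1 hr⟩,
        Or.inr rfl⟩
  · -- s's left endpoint lies below the interior of t
    have hx1 : s.1.1 < t.2.1 := lt_trans a1 a4
    have hle : fAt s s.1.1 ≤ fAt t s.1.1 :=
      below_le hgen hcf hC hs ht ⟨x0, ⟨a1, a2⟩, ⟨a3, a4⟩, h0⟩ (le_refl _) hls.le hl.le hx1.le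
    rw [fAt_left] at hle
    have hne : s.1.2 ≠ fAt t s.1.1 := by
      intro he
      exact endpoint_not_on_open hgen hC ht (hC s hs).1
        (by have := point_on_open hlt hl hx1
            have hs1 : s.1 = (s.1.1, s.1.2) := rfl
            rw [hs1, he]; exact this)
    exact Or.inl ⟨s.1, Or.inl rfl, fAt t s.1.1, lt_of_le_of_ne hle hne, point_on_open hlt hl hx1⟩

end
section
variable {P : Finset (ℝ × ℝ)} {C : Finset Seg}

lemma compress_below (hgen : GenPos P) (hcf : CrossingFree C) (hC : SegsOn P C)
    {a b c : Seg} (ha : a ∈ C) (hb : b ∈ C) (hc : c ∈ C)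
    (hab : Below a b) (hbc : Below b c) (hla : a.1.1 ≤ b.1.1) (hlc : c.1.1 ≤ b.1.1) :
    Below a c := by
  obtain ⟨xab, ⟨p1, p2⟩, ⟨p3, p4⟩, _⟩ := id hab
  obtain ⟨xbc, ⟨q1, q2⟩, ⟨q3, q4⟩, _⟩ := id hbc
  have h1 : b.1.1 < a.2.1 := lt_trans p3 p2
  have h2 : b.1.1 < b.2.1 := (hC b hb).2.2
  have h3 : b.1.1 < c.2.1 := lt_trans q1 q4
  have hm : b.1.1 < min a.2.1 (min b.2.1 c.2.1) := lt_min h1 (lt_min h2 h3)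
  set x := (b.1.1 + min a.2.1 (min b.2.1 c.2.1)) / 2 with hxdef
  have hx1 : b.1.1 < x := by rw [hxdef]; linarith
  have hx2 : x < min a.2.1 (min b.2.1 c.2.1) := by rw [hxdef]; linarith
  have hxa : x < a.2.1 := lt_of_lt_of_le hx2 (min_le_left _ _)
  have hxb : x < b.2.1 := lt_of_lt_of_le hx2 (le_trans (min_le_right _ _) (min_le_left _ _))
  have hxc : x < c.2.1 := lt_of_lt_of_le hx2 (le_trans (min_le_right _ _) (min_le_right _ _))
  have hax : a.1.1 < x := lt_of_le_of_lt hla hx1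
  have hcx : c.1.1 < x := lt_of_le_of_lt hlc hx1
  have f1 : fAt a x < fAt b x := below_lt hgen hcf hC ha hb hab hax hxa hx1 hxb
  have f2 : fAt b x < fAt c x := below_lt hgen hcf hC hb hc hbc hx1 hxb hcx hxc
  exact ⟨x, ⟨hax, hxa⟩, ⟨hcx, hxc⟩, lt_trans f1 f2⟩

lemma no_below_cycle (hgen : GenPos P) (hcf : CrossingFree C) (hC : SegsOn P C) :
    ∀ n, 1 ≤ n → ∀ g : ℕ → Seg, (∀ i, g i ∈ C) → (∀ i, Below (g i) (g (i + 1))) →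
      (∀ i, g (i + n) = g i) → False := by
  intro n
  induction n using Nat.strong_induction_on with
  | _ n IH =>
    intro hn g hmem hchain hper
    have hper' : ∀ k i, g (i + k * n) = g i := by
      intro k
      induction k with
      | zero => simp
      | succ k ih =>
        intro i
        have e : i + (k + 1) * n = i + k * n + n := by ring
        rw [e, hper, ih]
    have hmod : ∀ i, g i = g (i % n) := by
      intro i
      conv_lhs => rw [show i = i % n + i / n * n from (Nat.mod_add_div' i n).symm]
      exact hper' (i / n) (i % n)
    rcases Nat.lt_or_ge n 2 with h2 | h2
    · have hn1 : n = 1 := by omega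
      have hc0 := hchain 0
      rw [show (0 : ℕ) + 1 = 0 + n from by omega, hper 0] at hc0
      exact below_ne hc0 rfl
    · obtain ⟨k, hkr, hkmax⟩ := Finset.exists_max_image (Finset.range n)
        (fun i => (g i).1.1) ⟨0, Finset.mem_range.2 (by omega)⟩
      have hmax : ∀ i, (g i).1.1 ≤ (g k).1.1 := by
        intro i
        rw [hmod i]
        exact hkmax _ (Finset.mem_range.2 (Nat.mod_lt _ (by omega)))
      set m := n - 1 with hmdef
      have hm1 : 1 ≤ m := by omega
      have hm0 : 0 < m := hm1
      have hmn : m + 1 = n := by omega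
      apply IH m (by omega) hm1 (fun i => g (k + 1 + i + i / m)) (fun i => hmem _) ?_ ?_
      · -- chain
        intro i
        by_cases hdvd : m ∣ (i + 1)
        · -- wrap-around step: compress through the maximal element g k
          obtain ⟨e, he⟩ := hdvd
          have he1 : 1 ≤ e := by
            rcases Nat.eq_zero_or_pos e with h | h
            · rw [h, Nat.mul_zero] at he; omega
            · exact h
          have hdiv1 : (i + 1) / m = i / m + 1 := by
            rw [Nat.succ_div, if_pos ⟨e, he⟩]
          have hdiv2 : (i + 1) / m = e := by rw [he]; exact Nat.mul_div_cancel_left e hm0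
          set j := k + 1 + i + i / m with hjdef
          have hj1 : j + 1 = k + e * n := by
            have h' : j + 1 = k + (i + 1) + (i + 1) / m := by omega
            rw [h', hdiv2, he, ← hmn]
            ring
          have hgj1 : g (j + 1) = g k := by rw [hj1]; exact hper' e k
          have hb1 : Below (g j) (g k) := by rw [← hgj1]; exact hchain j
          have hb2 : Below (g k) (g (j + 2)) := by
            have := hchain (j + 1)
            rw [hgj1] at this
            exact this
          have hcomp := compress_below hgen hcf hC (hmem j) (hmem k) (hmem (j + 2))
            hb1 hb2 (hmax j) (hmax (j + 2))
          have hidx : k + 1 + (i + 1) + (i + 1) / m = j + 2 := by omega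
          show Below (g (k + 1 + i + i / m)) (g (k + 1 + (i + 1) + (i + 1) / m))
          rw [hidx]
          exact hcomp
        · have hdiv1 : (i + 1) / m = i / m := by
            rw [Nat.succ_div, if_neg hdvd]
            simp
          have hidx : k + 1 + (i + 1) + (i + 1) / m = (k + 1 + i + i / m) + 1 := by omega
          show Below (g (k + 1 + i + i / m)) (g (k + 1 + (i + 1) + (i + 1) / m))
          rw [hidx]
          exact hchain _
      · -- periodicity
        intro i
        have hdiv : (i + m) / m = i / m + 1 := Nat.add_div_right i hm0
        have hidx : k + 1 + (i + m) + (i + m) / m = (k + 1 + i + i / m) + n := by omega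
        show g (k + 1 + (i + m) + (i + m) / m) = g (k + 1 + i + i / m)
        rw [hidx]
        exact hper _

lemma exists_extreme (hgen : GenPos P) (hcf : CrossingFree C) (hC : SegsOn P C)
    (hne : C.Nonempty) : ∃ s ∈ C, ∀ t ∈ C, ¬ Below s t := by
  by_contra hcon
  push_neg at hcon
  obtain ⟨s0, hs0⟩ := hne
  have hF : ∀ s : {x // x ∈ C}, ∃ t : {x // x ∈ C}, Below s.1 t.1 := by
    rintro ⟨s, hs⟩
    obtain ⟨t, ht, hb⟩ := hcon s hs
    exact ⟨⟨t, ht⟩, hb⟩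
  choose F hFb using hF
  let g : ℕ → {x // x ∈ C} := fun i => F^[i] ⟨s0, hs0⟩
  have hchain : ∀ i, Below (g i).1 (g (i + 1)).1 := by
    intro i
    have : g (i + 1) = F (g i) := Function.iterate_succ_apply' F i _
    rw [this]
    exact hFb (g i)
  obtain ⟨a, b, hab, he⟩ := Finite.exists_ne_map_eq_of_infinite g
  suffices hcase : ∀ a b : ℕ, a < b → g a = g b → False by
    rcases Ne.lt_or_gt hab with h | h
    exacts [hcase a b h he, hcase b a h he.symm]
  clear hab he a b
  intro a b hlt he
  have hn1 : 1 ≤ b - a := by omega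
  apply no_below_cycle hgen hcf hC (b - a) hn1 (fun i => (g (a + i % (b - a))).1)
    (fun i => (g _).2) ?_ ?_
  · -- chain
    intro i
    have hr : i % (b - a) < b - a := Nat.mod_lt _ (by omega)
    by_cases hrn : i % (b - a) + 1 < b - a
    · have h1 : (i + 1) % (b - a) = i % (b - a) + 1 := by
        rw [Nat.add_mod, Nat.one_mod_eq_one.mpr (by omega), Nat.mod_eq_of_lt hrn]
      show Below (g (a + i % (b - a))).1 (g (a + (i + 1) % (b - a))).1
      rw [h1, show a + (i % (b - a) + 1) = (a + i % (b - a)) + 1 from by omega]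
      exact hchain _
    · have h1 : (i + 1) % (b - a) = 0 := by
        rcases eq_or_ne (b - a) 1 with h | h
        · rw [h]; exact Nat.mod_one _
        · rw [Nat.add_mod, Nat.one_mod_eq_one.mpr h,
            show i % (b - a) + 1 = b - a from by omega, Nat.mod_self]
      have h2 : g (a + i % (b - a) + 1) = g a := by
        rw [show a + i % (b - a) + 1 = b from by omega]
        exact he.symm
      show Below (g (a + i % (b - a))).1 (g (a + (i + 1) % (b - a))).1
      rw [h1, Nat.add_zero, ← h2]
      exact hchain _
  · -- periodicity
    intro i
    show (g (a + (i + (b - a)) % (b - a))).1 = (g (a + i % (b - a))).1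
    rw [Nat.add_mod_right]

end
section
variable {P : Finset (ℝ × ℝ)} {C : Finset Seg}

lemma exists_segExtreme (hgen : GenPos P) (hcf : CrossingFree C) (hC : SegsOn P C)
    (hne : C.Nonempty) : ∃ s, SegExtreme C s := by
  obtain ⟨s, hs, hmax⟩ := exists_extreme hgen hcf hC hne
  exact ⟨s, hs, fun t ht _ hdep =>
    hmax t ht (segDep_imp_below (hC s hs).2.2 (hC t ht).2.2 hdep)⟩

lemma extremes_disjoint (hgen : GenPos P) (hdx : DistinctX P) (hcf : CrossingFree C)
    (hC : SegsOn P C) {s t : Seg} (hs : SegExtreme C s) (ht : SegExtreme C t) (hst : s ≠ t) :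
    t.2.1 ≤ s.1.1 ∨ s.2.1 ≤ t.1.1 := by
  by_contra h
  push_neg at h
  obtain ⟨h1, h2⟩ := h
  have hls := (hC s hs.1).2.2
  have hlt := (hC t ht.1).2.2
  have hAB : max s.1.1 t.1.1 < min s.2.1 t.2.1 := max_lt (lt_min hls h1) (lt_min h2 hlt)
  set x := (max s.1.1 t.1.1 + min s.2.1 t.2.1) / 2 with hxdef
  have hx1 : max s.1.1 t.1.1 < x := by rw [hxdef]; linarith
  have hx2 : x < min s.2.1 t.2.1 := by rw [hxdef]; linarith
  have b1 : s.1.1 < x := lt_of_le_of_lt (le_max_left _ _) hx1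
  have b2 : t.1.1 < x := lt_of_le_of_lt (le_max_right _ _) hx1
  have b3 : x < s.2.1 := lt_of_lt_of_le hx2 (min_le_left _ _)
  have b4 : x < t.2.1 := lt_of_lt_of_le hx2 (min_le_right _ _)
  rcases lt_trichotomy (fAt s x) (fAt t x) with hlt' | hlt' | hlt'
  · exact hs.2 t ht.1 (Ne.symm hst)
      (below_imp_segDep hgen hdx hcf hC hs.1 ht.1 ⟨x, ⟨b1, b3⟩, ⟨b2, b4⟩, hlt'⟩)
  · exact not_vanish hcf hC hs.1 ht.1 hst b1 b3 b2 b4 hlt'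
  · exact ht.2 s hs.1 hst
      (below_imp_segDep hgen hdx hcf hC ht.1 hs.1 ⟨x, ⟨b2, b4⟩, ⟨b1, b3⟩, hlt'⟩)

lemma exists_isRex (hgen : GenPos P) (hdx : DistinctX P) (hcf : CrossingFree C)
    (hC : SegsOn P C) (hne : C.Nonempty) : ∃ s, IsRex C s := by
  classical
  obtain ⟨s0, hs0⟩ := exists_segExtreme hgen hcf hC hne
  have hEne : (C.filter (fun s => SegExtreme C s)).Nonempty :=
    ⟨s0, Finset.mem_filter.2 ⟨hs0.1, hs0⟩⟩
  obtain ⟨s, hsE, hmax⟩ := Finset.exists_max_image _ (fun s => s.1.1) hEne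
  have hsex : SegExtreme C s := (Finset.mem_filter.1 hsE).2
  refine ⟨s, hsex, ?_⟩
  intro t htex hts
  rcases extremes_disjoint hgen hdx hcf hC hsex htex (Ne.symm hts) with h | h
  · exact h
  · exfalso
    have := hmax t (Finset.mem_filter.2 ⟨htex.1, htex⟩)
    have hls := (hC s hsex.1).2.2
    linarith

end

lemma segGraph_adj_iff {C : Finset Seg} {a b : ℝ × ℝ} :
    (segGraph C).Adj a b ↔ a ≠ b ∧ ((a, b) ∈ C ∨ (b, a) ∈ C) := Iff.rfl

lemma segGraph_mono {C' C : Finset Seg} (h : C' ⊆ C) : segGraph C' ≤ segGraph C := by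
  intro a b hab
  rw [segGraph_adj_iff] at hab ⊢
  exact ⟨hab.1, Or.imp (fun hx => h hx) (fun hx => h hx) hab.2⟩

lemma reach_erase {C : Finset Seg} {s : Seg} {p q : ℝ × ℝ}
    (h : (segGraph C).Reachable p q) :
    (segGraph (C.erase s)).Reachable p q ∨ (segGraph (C.erase s)).Reachable p s.1 ∨
      (segGraph (C.erase s)).Reachable p s.2 := by
  obtain ⟨w⟩ := h
  induction w with
  | nil => exact Or.inl (SimpleGraph.Reachable.refl _)
  | @cons u v q' h w ih =>
    have hedge : (segGraph (C.erase s)).Adj u v ∨ (u, v) = s ∨ (v, u) = s := by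
      rw [segGraph_adj_iff] at h ⊢
      rcases h.2 with huv | hvu
      · by_cases he : (u, v) = s
        · exact Or.inr (Or.inl he)
        · exact Or.inl ⟨h.1, Or.inl (Finset.mem_erase.2 ⟨he, huv⟩)⟩
      · by_cases he : (v, u) = s
        · exact Or.inr (Or.inr he)
        · exact Or.inl ⟨h.1, Or.inr (Finset.mem_erase.2 ⟨he, hvu⟩)⟩
    rcases hedge with he | he | he
    · rcases ih with h' | h' | h'
      · exact Or.inl ((SimpleGraph.Adj.reachable he).trans h')
      · exact Or.inr (Or.inl ((SimpleGraph.Adj.reachable he).trans h'))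
      · exact Or.inr (Or.inr ((SimpleGraph.Adj.reachable he).trans h'))
    · have hu : u = s.1 := by rw [← he]
      exact Or.inr (Or.inl (hu ▸ SimpleGraph.Reachable.refl u))
    · have hu : u = s.2 := by rw [← he]
      exact Or.inr (Or.inr (hu ▸ SimpleGraph.Reachable.refl u))
/-- The set `D` of crossing-free, cycle-free segment sets on `P` without hidden
components is serializable: it is non-empty, and every non-empty `C ∈ D` contains a
right-most extreme element `rex(C)` with `C \ {rex(C)} ∈ D`. -/
theorem prestr_serializable (P : Finset (ℝ × ℝ))
    (hgen : GenPos P) (hx : DistinctX P) :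
    letI D : Set (Finset Seg) := {C | SegsOn P C ∧ CrossingFree C ∧
      (segGraph C).IsAcyclic ∧ ¬ HasHiddenComponent P C}
    D.Nonempty ∧
    ∀ C ∈ D, C.Nonempty → ∃ s : Seg, IsRex C s ∧ C.erase s ∈ D := by
  constructor
  · refine ⟨∅, ?_, ?_, ?_, ?_⟩
    · exact fun s hs => absurd hs (Finset.notMem_empty s)
    · exact fun s hs => absurd hs (Finset.notMem_empty s)
    · intro v c hc
      cases c with
      | nil => exact hc.ne_nil rfl
      | cons h w => exact absurd (segGraph_adj_iff.1 h).2 (by simp)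
    · rintro ⟨p, hp, hq⟩
      obtain ⟨s, hs, _⟩ := hq p (SimpleGraph.Reachable.refl p)
      exact absurd hs (Finset.notMem_empty s)
  · rintro C ⟨hC, hcf, hacyc, hhid⟩ hne
    obtain ⟨s, hrex⟩ := exists_isRex hgen hx hcf hC hne
    have hsub : C.erase s ⊆ C := Finset.erase_subset _ _
    refine ⟨s, hrex, fun t ht => hC t (hsub ht),
      fun t ht u hu htu => hcf t (hsub ht) u (hsub hu) htu, ?_, ?_⟩
    · intro v c hc
      exact hacyc _ (hc.mapLe (segGraph_mono hsub))
    · rintro ⟨p, hp, hq⟩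
      have hw : ¬ ∀ q, (segGraph C).Reachable p q → ∃ t ∈ C, q ∈ lowShadow t :=
        fun hall => hhid ⟨p, hp, hall⟩
      push_neg at hw
      obtain ⟨q, hreach, hqfree⟩ := hw
      rcases reach_erase (s := s) hreach with h' | h' | h'
      · obtain ⟨t, ht, hlow⟩ := hq q h'
        exact hqfree t (hsub ht) hlow
      · obtain ⟨t, ht, hlow⟩ := hq s.1 h'
        exact hrex.1.2 t (hsub ht) (Finset.ne_of_mem_erase ht)
          (Or.inl ⟨s.1, Set.mem_insert _ _, hlow⟩)
      · obtain ⟨t, ht, hlow⟩ := hq s.2 h'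
        exact hrex.1.2 t (hsub ht) (Finset.ne_of_mem_erase ht)
          (Or.inl ⟨s.2, Set.mem_insert_of_mem _ rfl, hlow⟩)
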